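/- Let C₁ < C₂ < ... < C_m (as right-padded ℓ_max-bit integers) be the lexicographically smallest codewords at each occupied depth of a canonical code tree, with lengths ℓ₁ < ℓ₂ < ... < ℓ_m. Then for any bit string X of length ℓ_max that begins with some codeword of the code of length ℓ_i, the predecessor of X among {C₁,...,C_m} (with respect to the right-padded integer order) is exactly C_i. -/

import Mathlib

inductive BTree where
  | leaf : BTree
  | node : BTree → BTree → BTree

namespace BTree

def codewords : BTree → List (List Bool)
  | .leaf => [[]]
  | .node l r => (codewords l).map (List.cons false) ++ (codewords r).map (List.cons true)

def numLeaves : BTree → ℕ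
  | .leaf => 1
  | .node l r => numLeaves l + numLeaves r

/-- Codewords read left to right are strictly increasing lexicographically
with non-decreasing lengths. -/
def Canonical (t : BTree) : Prop :=
  (codewords t).Chain' (fun a b => List.Lex (· < ·) a b) ∧
  (codewords t).Chain' (fun a b => a.length ≤ b.length)

/-- Length of the maximal leading run of 1-bits. -/
def leadOnes (C : List Bool) : ℕ := (C.takeWhile id).length

end BTree

namespace BTree

/-- The value of a codeword as a binary integer (most significant bit first). -/
def val (C : List Bool) : ℕ := C.foldl (fun n b => 2 * n + b.toNat) 0

/-- Maximum codeword length of the tree. -/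
def lmax (t : BTree) : ℕ := ((codewords t).map List.length).foldr max 0

/-- The value of a codeword right-padded with 0s to `L` bits. -/
def padVal (L : ℕ) (C : List Bool) : ℕ := val (C ++ List.replicate (L - C.length) false)

/-- The lexicographically smallest (= leftmost) codeword of length `ℓ`, if any. -/
def first (t : BTree) (ℓ : ℕ) : Option (List Bool) :=
  ((codewords t).filter (fun C => C.length = ℓ)).head?

end BTree

namespace BTree

lemma foldl_shift (B : List Bool) (n : ℕ) :
    B.foldl (fun n b => 2 * n + b.toNat) n = n * 2 ^ B.length + val B := by
  induction B generalizing n with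
  | nil => simp [val]
  | cons b B ih =>
    simp only [List.foldl_cons, List.length_cons, val] at *
    rw [ih (2 * n + b.toNat), ih (2 * 0 + b.toNat)]
    ring

lemma val_append (A B : List Bool) : val (A ++ B) = val A * 2 ^ B.length + val B := by
  simp only [val, List.foldl_append]
  exact foldl_shift B (val A)

lemma val_cons (b : Bool) (B : List Bool) : val (b :: B) = b.toNat * 2 ^ B.length + val B := by
  have := val_append [b] B
  simpa [val] using this

lemma val_lt (B : List Bool) : val B < 2 ^ B.length := by
  induction B with
  | nil => simp [val]
  | cons b B ih =>
    rw [val_cons]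
    have : b.toNat ≤ 1 := Bool.toNat_le b
    calc b.toNat * 2 ^ B.length + val B < b.toNat * 2 ^ B.length + 2 ^ B.length := by omega
    _ ≤ 2 ^ (b :: B).length := by simp [List.length_cons, pow_succ]; nlinarith

lemma val_replicate_false (n : ℕ) : val (List.replicate n false) = 0 := by
  induction n with
  | zero => simp [val]
  | succ n ih => rw [List.replicate_succ, val_cons]; simpa using ih

lemma padVal_eq (L : ℕ) (A : List Bool) : padVal L A = val A * 2 ^ (L - A.length) := by
  rw [padVal, val_append, val_replicate_false, List.length_replicate]
  omega

lemma val_split_lt (P u v : List Bool) (h : u.length = v.length) :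
    val (P ++ false :: u) < val (P ++ true :: v) := by
  rw [val_append, val_append, val_cons, val_cons]
  have hu := val_lt u
  rw [show u.length = v.length from h] at hu
  simp only [List.length_cons, h, Bool.toNat_false, Bool.toNat_true, zero_mul, one_mul, zero_add]
  omega

lemma val_lt_of_lex {U V : List Bool} (h : List.Lex (· < ·) U V) (hl : U.length = V.length) :
    val U < val V := by
  induction h with
  | nil => simp at hl
  | @cons a U V h ih =>
    simp only [List.length_cons, Nat.succ_inj] at hl
    rw [val_cons, val_cons, hl]
    have := ih hl
    omega
  | @rel a U b V hab =>
    rw [Bool.lt_iff] at hab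
    obtain ⟨rfl, rfl⟩ := hab
    simp only [List.length_cons, Nat.succ_inj] at hl
    rw [val_cons, val_cons, hl]
    have := val_lt U
    rw [hl] at this
    simp only [Bool.toNat_false, Bool.toNat_true, zero_mul, one_mul, zero_add]
    omega

lemma lex_decomp {A B : List Bool} (h : List.Lex (· < ·) A B) (hp : ¬ A <+: B) :
    ∃ P u v, A = P ++ false :: u ∧ B = P ++ true :: v := by
  induction h with
  | nil => exact absurd (List.nil_prefix) hp
  | @cons a A B h ih =>
    have hp' : ¬ A <+: B := fun hh => hp (List.cons_prefix_cons.mpr ⟨rfl, hh⟩)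
    obtain ⟨P, u, v, h1, h2⟩ := ih hp'
    exact ⟨a :: P, u, v, by simp [h1], by simp [h2]⟩
  | @rel a A b B hab =>
    rw [Bool.lt_iff] at hab
    obtain ⟨rfl, rfl⟩ := hab
    exact ⟨[], A, B, rfl, rfl⟩

lemma codewords_prefixfree (t : BTree) :
    ∀ A ∈ codewords t, ∀ B ∈ codewords t, A <+: B → A = B := by
  induction t with
  | leaf =>
    intro A hA B hB _
    simp [codewords] at hA hB
    rw [hA, hB]
  | node l r ihl ihr =>
    intro A hA B hB hp
    simp only [codewords, List.mem_append, List.mem_map] at hA hB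
    rcases hA with ⟨A', hA', rfl⟩ | ⟨A', hA', rfl⟩ <;>
      rcases hB with ⟨B', hB', rfl⟩ | ⟨B', hB', rfl⟩ <;>
      rw [List.cons_prefix_cons] at hp
    · rw [ihl A' hA' B' hB' hp.2]
    · exact absurd hp.1 (by simp)
    · exact absurd hp.1 (by simp)
    · rw [ihr A' hA' B' hB' hp.2]

lemma le_foldr_max {a : ℕ} : ∀ {l : List ℕ}, a ∈ l → a ≤ l.foldr max 0
  | b :: l, h => by
    rcases List.mem_cons.mp h with rfl | h
    · exact le_max_left _ _
    · exact le_trans (le_foldr_max h) (le_max_right _ _)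

lemma length_le_lmax {t : BTree} {C : List Bool} (h : C ∈ codewords t) : C.length ≤ lmax t :=
  le_foldr_max (List.mem_map_of_mem (f := List.length) h)

end BTree

open BTree in
/-- Decoding by predecessor search: if a bit string `X` of length `ℓ_max`
begins with a codeword `C` of the canonical code, and `F` is the leftmost
codeword of length `|C|`, then the predecessor of `X` among the right-padded
leftmost per-depth codewords is exactly the padded `F`: padded `F` is at most
`X`, and any other per-depth leftmost codeword whose padded value is at most
that of `X` has padded value at most that of `F`. -/
theorem stmt19 (t : BTree) (ht : Canonical t)
    (X : List Bool) (hX : X.length = lmax t)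
    (C : List Bool) (hC : C ∈ codewords t) (hpre : C <+: X)
    (F : List Bool) (hF : first t C.length = some F) :
    padVal (lmax t) F ≤ val X ∧
    ∀ ℓ' : ℕ, ∀ F' : List Bool, first t ℓ' = some F' →
      padVal (lmax t) F' ≤ val X → padVal (lmax t) F' ≤ padVal (lmax t) F := by
  obtain ⟨hclex, hclen⟩ := ht
  haveI t1 : IsTrans (List Bool) (fun a b => List.Lex (· < ·) a b) :=
    ⟨fun a b c h1 h2 => List.lex_trans (fun h1 h2 => lt_trans h1 h2) h1 h2⟩
  haveI t2 : IsTrans (List Bool) (fun a b : List Bool => a.length ≤ b.length) :=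
    ⟨fun _ _ _ h1 h2 => le_trans h1 h2⟩
  have hlex : (codewords t).Pairwise (fun a b => List.Lex (· < ·) a b) :=
    List.isChain_iff_pairwise.mp hclex
  have hlen : (codewords t).Pairwise (fun a b : List Bool => a.length ≤ b.length) :=
    List.isChain_iff_pairwise.mp hclen
  -- cross lemma
  have cross : ∀ A ∈ codewords t, ∀ B ∈ codewords t, A.length < B.length →
      List.Lex (· < ·) A B := by
    intro A hA B hB hAB
    obtain ⟨i, hi, hAi⟩ := List.getElem_of_mem hA
    obtain ⟨j, hj, hBj⟩ := List.getElem_of_mem hB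
    rcases lt_trichotomy i j with hij | rfl | hij
    · have := (List.pairwise_iff_getElem.mp hlex) i j hi hj hij
      rwa [hAi, hBj] at this
    · rw [hAi] at hBj; rw [hBj] at hAB; omega
    · have := (List.pairwise_iff_getElem.mp hlen) j i hj hi hij
      rw [hAi, hBj] at this; omega
  -- basic facts about `first`
  have firstFacts : ∀ (ℓ : ℕ) (G : List Bool), first t ℓ = some G →
      G ∈ codewords t ∧ G.length = ℓ := by
    intro ℓ G hG
    rw [first] at hG
    obtain ⟨rest, hrest⟩ := List.head?_eq_some_iff.mp hG
    have hGm : G ∈ (codewords t).filter (fun C => C.length = ℓ) := by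
      rw [hrest]; exact List.mem_cons_self
    rw [List.mem_filter] at hGm
    exact ⟨hGm.1, by simpa using hGm.2⟩
  obtain ⟨hFm, hFl⟩ := firstFacts _ _ hF
  set L := lmax t with hL
  have hCL : C.length ≤ L := length_le_lmax hC
  have hFL : F.length ≤ L := length_le_lmax hFm
  -- F is lex-minimal among codewords of length C.length
  have hFC : val F ≤ val C := by
    rw [first] at hF
    obtain ⟨rest, hrest⟩ := List.head?_eq_some_iff.mp hF
    have hCf : C ∈ (codewords t).filter (fun a => a.length = C.length) :=
      List.mem_filter.mpr ⟨hC, by simp⟩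
    rw [hrest] at hCf
    rcases List.mem_cons.mp hCf with rfl | hCf
    · exact le_refl _
    · have hpw : ((codewords t).filter (fun a => a.length = C.length)).Pairwise
          (fun a b => List.Lex (· < ·) a b) := hlex.sublist (List.filter_sublist)
      rw [hrest] at hpw
      have := (List.pairwise_cons.mp hpw).1 C hCf
      exact le_of_lt (val_lt_of_lex this (by rw [hFl]))
  obtain ⟨R, rfl⟩ := hpre
  have hXlen : C.length + R.length = L := by
    rw [← hX]; simp
  have hvalX : val (C ++ R) = val C * 2 ^ R.length + val R := val_append C R
  have goal1 : padVal L F ≤ val (C ++ R) := by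
    have h2 : L - C.length = R.length := by omega
    rw [padVal_eq, hFl, hvalX, h2]
    have h1 : val F * 2 ^ R.length ≤ val C * 2 ^ R.length :=
      Nat.mul_le_mul_right _ hFC
    omega
  refine ⟨goal1, ?_⟩
  intro ℓ' F' hF' h2
  obtain ⟨hF'm, hF'l⟩ := firstFacts _ _ hF'
  have hF'L : F'.length ≤ L := length_le_lmax hF'm
  rcases lt_trichotomy ℓ' C.length with hlt | rfl | hgt
  · -- F' strictly shorter: padVal F' < padVal F
    have hlexFF : List.Lex (· < ·) F' F := by
      apply cross F' hF'm F hFm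
      rw [hF'l, hFl]; exact hlt
    have hnp : ¬ F' <+: F := by
      intro hpf
      have := codewords_prefixfree t F' hF'm F hFm hpf
      rw [this] at hF'l
      rw [hFl] at hF'l
      omega
    obtain ⟨P, u, v, hd1, hd2⟩ := lex_decomp hlexFF hnp
    apply le_of_lt
    rw [padVal, padVal, hd1, hd2]
    simp only [List.append_assoc, List.cons_append]
    apply val_split_lt
    simp only [List.length_append, List.length_replicate, List.length_cons]
    rw [hd1] at hF'L; rw [hd2] at hFL
    simp at hF'L hFL
    omega
  · -- same length: F' = F
    rw [hF] at hF'
    rw [Option.some_inj.mp hF']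
  · -- F' strictly longer: padVal F' > val X, contradiction
    exfalso
    have hlexCF : List.Lex (· < ·) C F' := by
      apply cross C hC F' hF'm
      rw [hF'l]; exact hgt
    have hnp : ¬ C <+: F' := by
      intro hpf
      have := codewords_prefixfree t C hC F' hF'm hpf
      rw [← this] at hF'l
      omega
    obtain ⟨P, u, v, hd1, hd2⟩ := lex_decomp hlexCF hnp
    have hcontra : val (C ++ R) < padVal L F' := by
      rw [padVal, hd1, hd2]
      simp only [List.append_assoc, List.cons_append]
      apply val_split_lt
      simp only [List.length_append, List.length_replicate, List.length_cons]
      rw [hd1] at hXlen hCL; rw [hd2] at hF'L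
      simp at hXlen hCL hF'L
      omega
    omega
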